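/- Let R be a commutative ring with 2 invertible (or more generally a domain with char ≠ 2), S = R[x,y], P ∈ S, and U the enveloping algebra of the Lie-Rinehart algebra (S, Ω_{S/R}) associated to the Poisson bracket {x,y} = P. The Nakayama automorphism ν of U given by ν(s)=s, ν(dx) = dx + 2 ∂P/∂y, ν(dy) = dy − 2 ∂P/∂x is the identity if and only if P ∈ R (i.e., ∂P/∂x = ∂P/∂y = 0 when R contains ℚ). -/

import Mathlib

open MvPolynomial

lemma my_coeff_pderiv {R : Type*} [CommRing R] (i : Fin 2) (m : Fin 2 →₀ ℕ)
    (P : MvPolynomial (Fin 2) R) :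
    coeff m (pderiv i P) = (m i + 1 : ℕ) * coeff (m + Finsupp.single i 1) P := by
  induction P using MvPolynomial.induction_on' with
  | monomial s a =>
    rw [pderiv_monomial, coeff_monomial, coeff_monomial]
    by_cases hs : s = m + Finsupp.single i 1
    · have h1 : s - Finsupp.single i 1 = m := by
        subst hs; ext j; simp [Finsupp.single_apply]
      have h2 : s i = m i + 1 := by subst hs; simp
      rw [if_pos h1, if_pos hs, h2]; push_cast; ring
    · have : ¬ (s - Finsupp.single i 1 = m) ∨ s i = 0 := by
        by_contra h
        push_neg at h
        obtain ⟨h1, h2⟩ := h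
        apply hs
        rw [← h1]
        ext j
        simp only [Finsupp.add_apply, Finsupp.tsub_apply, Finsupp.single_apply]
        rcases eq_or_ne i j with rfl | hij
        · simp; omega
        · simp [hij]
      rcases this with h | h
      · simp [h, if_neg hs]
      · simp [h, if_neg hs]
  | add p q hp hq => simp [hp, hq, mul_add]

lemma my_const_of_pderiv {R : Type*} [CommRing R] [IsDomain R] [CharZero R]
    (P : MvPolynomial (Fin 2) R) (h0 : pderiv 0 P = 0) (h1 : pderiv 1 P = 0) :
    ∃ c : R, P = C c := by
  refine ⟨coeff 0 P, ?_⟩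
  ext m
  rcases eq_or_ne m 0 with rfl | hm
  · simp
  · rw [coeff_C, if_neg (Ne.symm hm)]
    obtain ⟨i, hi⟩ : ∃ i, m i ≠ 0 := by
      by_contra h; push_neg at h; exact hm (Finsupp.ext fun j => h j)
    have hmi : m = (m - Finsupp.single i 1) + Finsupp.single i 1 := by
      ext j
      simp only [Finsupp.add_apply, Finsupp.tsub_apply, Finsupp.single_apply]
      rcases eq_or_ne i j with rfl | hij
      · simp; omega
      · simp [hij]
    set m' : Fin 2 →₀ ℕ := m - Finsupp.single i 1 with hm'
    have key := my_coeff_pderiv i m' P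
    have hz : pderiv i P = 0 := by fin_cases i <;> assumption
    rw [hz, coeff_zero, ← hmi] at key
    rcases mul_eq_zero.mp key.symm with h | h
    · exfalso
      have : (m' i + 1 : ℕ) = 0 := by exact_mod_cast h
      omega
    · exact h


/-- Let `R` be a domain of characteristic zero (in particular `2` is
invertible and `R ⊇ ℚ`-type conclusions hold), `S = R[x,y]`, `P ∈ S`, and `U` the
enveloping algebra of the Lie-Rinehart algebra `(S, Ω_{S/R})` of the Poisson bracket
`{x,y} = P` (encoded by an injective `ιS : S →ₐ[R] U`, the classes `dx, dy` of the
differentials, and the generation hypothesis).  The Nakayama automorphism `ν` with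
`ν(s) = s`, `ν(dx) = dx + 2∂P/∂y`, `ν(dy) = dy − 2∂P/∂x` is the identity if and only if
`P ∈ R` is a constant. -/
theorem stmt17 {R U : Type*} [CommRing R] [IsDomain R] [CharZero R]
    [Ring U] [Algebra R U]
    (P : MvPolynomial (Fin 2) R)
    (ιS : MvPolynomial (Fin 2) R →ₐ[R] U) (hinj : Function.Injective ιS)
    (dx dy : U)
    (hgen : ∀ u : U, u ∈ Algebra.adjoin R (Set.range ιS ∪ {dx, dy}))
    (ν : U →ₐ[R] U)
    (hνS : ∀ f : MvPolynomial (Fin 2) R, ν (ιS f) = ιS f)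
    (hνx : ν dx = dx + ιS (2 * pderiv 1 P))
    (hνy : ν dy = dy - ιS (2 * pderiv 0 P)) :
    ν = AlgHom.id R U ↔ ∃ c : R, P = C c := by
  constructor
  · intro h
    have h2ne : (2 : MvPolynomial (Fin 2) R) ≠ 0 := by
      exact_mod_cast (two_ne_zero : (2 : MvPolynomial (Fin 2) R) ≠ 0)
    have hx0 : (2 : MvPolynomial (Fin 2) R) * pderiv 1 P = 0 := by
      apply hinj
      rw [h] at hνx
      simp only [AlgHom.id_apply] at hνx
      have : ιS (2 * pderiv 1 P) = 0 := left_eq_add.mp hνx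
      simpa using this
    have hy0 : (2 : MvPolynomial (Fin 2) R) * pderiv 0 P = 0 := by
      apply hinj
      rw [h] at hνy
      simp only [AlgHom.id_apply] at hνy
      have : ιS (2 * pderiv 0 P) = 0 := sub_eq_self.mp hνy.symm
      simpa using this
    exact my_const_of_pderiv P
      ((mul_eq_zero.mp hy0).resolve_left h2ne)
      ((mul_eq_zero.mp hx0).resolve_left h2ne)
  · rintro ⟨c, rfl⟩
    have hdx : ν dx = dx := by
      rw [hνx]
      simp
    have hdy : ν dy = dy := by
      rw [hνy]
      simp
    ext u
    have hu := hgen u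
    induction hu using Algebra.adjoin_induction with
    | mem a ha =>
      rcases ha with ⟨f, rfl⟩ | ha
      · simpa using hνS f
      · rcases ha with rfl | rfl
        · simpa using hdx
        · simpa using hdy
    | algebraMap r => simp
    | add a b _ _ ha hb => simp [ha, hb]
    | mul a b _ _ ha hb => simp [ha, hb]
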